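/- (Main Theorem) The map n ↦ f_n = {F_n, F_{n+1}} from (ℕ, |·|) to (X, d_φ) is a (1,1)-quasi-isometric embedding: for all natural numbers m, n ≥ 1, |m - n| - 1 ≤ d_φ(f_m, f_n) ≤ |m - n| + 1. -/

import Mathlib

/-- `q n₁ n₂ m` is the minimum of `|x| + |y|` over integer solutions of `m = n₁·x + n₂·y`. -/
noncomputable def q (n₁ n₂ m : ℕ) : ℕ :=
  sInf {s : ℕ | ∃ x y : ℤ, (m : ℤ) = (n₁ : ℤ) * x + (n₂ : ℤ) * y ∧ s = x.natAbs + y.natAbs}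

/-- `qPair n₁ n₂ m₁ m₂ = max (q_{n}(m₁)) (q_{n}(m₂))` for pairs `n = {n₁,n₂}`, `m = {m₁,m₂}`. -/
noncomputable def qPair (n₁ n₂ m₁ m₂ : ℕ) : ℕ := max (q n₁ n₂ m₁) (q n₁ n₂ m₂)

/-- `dA a m₁ m₂ n₁ n₂ = log_a (max (q_n(m), q_m(n)))`. -/
noncomputable def dA (a : ℝ) (m₁ m₂ n₁ n₂ : ℕ) : ℝ :=
  Real.logb a (max (qPair n₁ n₂ m₁ m₂) (qPair m₁ m₂ n₁ n₂))

open Real goldenRatio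

-- fib upper bound: fib (k+1) ≤ φ^k
lemma fib_le_gold_pow : ∀ k : ℕ, (Nat.fib (k+1) : ℝ) ≤ goldenRatio ^ k := by
  intro k
  induction k using Nat.strong_induction_on with
  | _ k ih =>
    match k with
    | 0 => simp
    | 1 => simpa using one_lt_goldenRatio.le
    | (k+2) =>
      have h1 := ih (k+1) (by omega)
      have h2 := ih k (by omega)
      have : (Nat.fib (k+3) : ℝ) = Nat.fib (k+2) + Nat.fib (k+1) := by
        rw [Nat.fib_add_two]; push_cast; ring
      rw [this, pow_succ, pow_succ]
      have hsq : goldenRatio * goldenRatio = goldenRatio + 1 := by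
        have := goldenRatio_sq; nlinarith
      have e : goldenRatio ^ k * goldenRatio * goldenRatio
          = goldenRatio ^ (k+1) + goldenRatio ^ k := by
        rw [pow_succ]; linear_combination (goldenRatio ^ k) * hsq
      rw [e]; push_cast at h1 ⊢; linarith

lemma gold_pow_le_fib : ∀ k : ℕ, goldenRatio ^ k ≤ (Nat.fib (k+2) : ℝ) := by
  intro k
  induction k using Nat.strong_induction_on with
  | _ k ih =>
    match k with
    | 0 => simp
    | 1 =>
      have : (Nat.fib 3 : ℝ) = 2 := by norm_num [Nat.fib]
      rw [this, pow_one]; exact goldenRatio_lt_two.le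
    | (k+2) =>
      have h1 := ih (k+1) (by omega)
      have h2 := ih k (by omega)
      have : (Nat.fib (k+4) : ℝ) = Nat.fib (k+3) + Nat.fib (k+2) := by
        rw [Nat.fib_add_two]; push_cast; ring
      rw [this, pow_succ, pow_succ]
      have hsq : goldenRatio * goldenRatio = goldenRatio + 1 := by
        have := goldenRatio_sq; nlinarith
      have e : goldenRatio ^ k * goldenRatio * goldenRatio
          = goldenRatio ^ (k+1) + goldenRatio ^ k := by
        rw [pow_succ]; linear_combination (goldenRatio ^ k) * hsq
      rw [e]; push_cast at h1 ⊢; linarith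

-- negative identity
lemma fib_neg_identity (n : ℕ) : ∀ j : ℕ,
    (Nat.fib (j+1) : ℤ) * Nat.fib (n+j) - Nat.fib j * Nat.fib (n+j+1) = (-1)^j * Nat.fib n := by
  intro j
  induction j with
  | zero => simp
  | succ j ih =>
    have e1 : (Nat.fib (j+2) : ℤ) = Nat.fib (j+1) + Nat.fib j := by
      rw [Nat.fib_add_two]; push_cast; ring
    have e2 : (Nat.fib (n+j+2) : ℤ) = Nat.fib (n+j+1) + Nat.fib (n+j) := by
      rw [Nat.fib_add_two]; push_cast; ring
    have : n + (j+1) = n + j + 1 := by ring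
    rw [this, e1]
    have : n + j + 1 + 1 = n + j + 2 := by ring
    rw [this, e2, pow_succ]
    linarith [ih]

-- membership / q ≤ witness
lemma q_le_witness {n₁ n₂ m : ℕ} (x y : ℤ) (h : (m : ℤ) = (n₁ : ℤ) * x + (n₂ : ℤ) * y) :
    q n₁ n₂ m ≤ x.natAbs + y.natAbs :=
  Nat.sInf_le ⟨x, y, h, rfl⟩

lemma q_nonempty_mem {n₁ n₂ m : ℕ} (x y : ℤ) (h : (m : ℤ) = (n₁ : ℤ) * x + (n₂ : ℤ) * y) :
    ∃ x' y' : ℤ, (m : ℤ) = (n₁ : ℤ) * x' + (n₂ : ℤ) * y' ∧ q n₁ n₂ m = x'.natAbs + y'.natAbs := by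
  have hne : Set.Nonempty {s : ℕ | ∃ x y : ℤ, (m : ℤ) = (n₁ : ℤ) * x + (n₂ : ℤ) * y ∧ s = x.natAbs + y.natAbs} :=
    ⟨x.natAbs + y.natAbs, x, y, h, rfl⟩
  exact Nat.sInf_mem hne

lemma q_lower {n₁ n₂ m : ℕ} (hle : n₁ ≤ n₂) (x y : ℤ)
    (h : (m : ℤ) = (n₁ : ℤ) * x + (n₂ : ℤ) * y) : m ≤ n₂ * q n₁ n₂ m := by
  obtain ⟨x', y', h', hq⟩ := q_nonempty_mem x y h
  have : (m : ℤ) ≤ (n₂ : ℤ) * (x'.natAbs + y'.natAbs) := by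
    calc (m : ℤ) = (n₁ : ℤ) * x' + (n₂ : ℤ) * y' := h'
    _ ≤ (n₁ : ℤ) * |x'| + (n₂ : ℤ) * |y'| := by
        have := le_abs_self x'; have := le_abs_self y'
        have h1 : (0:ℤ) ≤ n₁ := Int.natCast_nonneg _
        have h2 : (0:ℤ) ≤ n₂ := Int.natCast_nonneg _
        nlinarith
    _ ≤ (n₂ : ℤ) * |x'| + (n₂ : ℤ) * |y'| := by
        have : (n₁:ℤ) ≤ n₂ := by exact_mod_cast hle
        nlinarith [abs_nonneg x']
    _ = (n₂ : ℤ) * (x'.natAbs + y'.natAbs) := by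
        rw [Int.abs_eq_natAbs, Int.abs_eq_natAbs]; push_cast; ring
  rw [hq]
  exact_mod_cast this

lemma natAbs_neg_one_pow_mul (j : ℕ) (c : ℕ) : (((-1:ℤ))^j * c).natAbs = c := by
  rw [Int.natAbs_mul, Int.natAbs_pow]
  simp

-- q upper bound, positive direction: fib (n+j+1) in basis (fib n, fib (n+1))
lemma q_le_pos (n j : ℕ) :
    q (Nat.fib n) (Nat.fib (n+1)) (Nat.fib (n+j+1)) ≤ Nat.fib (j+2) := by
  have h := Nat.fib_add j n
  have hw : (Nat.fib (n+j+1) : ℤ)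
      = (Nat.fib n : ℤ) * (Nat.fib j) + (Nat.fib (n+1) : ℤ) * (Nat.fib (j+1)) := by
    have : n + j + 1 = j + n + 1 := by ring
    rw [this, h]; push_cast; ring
  have := q_le_witness (n₁ := Nat.fib n) (n₂ := Nat.fib (n+1)) (m := Nat.fib (n+j+1))
    (Nat.fib j) (Nat.fib (j+1)) hw
  simpa [Nat.fib_add_two] using this

-- q upper bound, negative direction: fib n in basis (fib (n+j), fib (n+j+1))
lemma q_le_neg (n j : ℕ) :
    q (Nat.fib (n+j)) (Nat.fib (n+j+1)) (Nat.fib n) ≤ Nat.fib (j+2) := by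
  have h := fib_neg_identity n j
  have hw : (Nat.fib n : ℤ)
      = (Nat.fib (n+j) : ℤ) * ((-1)^j * Nat.fib (j+1))
        + (Nat.fib (n+j+1) : ℤ) * (-((-1)^j * Nat.fib j)) := by
    have hsq : ((-1:ℤ))^j * ((-1:ℤ))^j = 1 := by
      rw [← pow_add]; exact Even.neg_one_pow ⟨j, rfl⟩
    linear_combination (-(-1:ℤ)^j) * h + (-(Nat.fib n : ℤ)) * hsq
  have := q_le_witness (n₁ := Nat.fib (n+j)) (n₂ := Nat.fib (n+j+1)) (m := Nat.fib n)
    ((-1)^j * Nat.fib (j+1)) (-((-1)^j * Nat.fib j)) hw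
  rw [Int.natAbs_neg, natAbs_neg_one_pow_mul, natAbs_neg_one_pow_mul] at this
  calc q (Nat.fib (n+j)) (Nat.fib (n+j+1)) (Nat.fib n) ≤ Nat.fib (j+1) + Nat.fib j := this
    _ = Nat.fib (j+2) := by rw [Nat.fib_add_two]; ring

lemma pos_witness (n j : ℕ) : (Nat.fib (n+j+1) : ℤ)
    = (Nat.fib n : ℤ) * (Nat.fib j) + (Nat.fib (n+1) : ℤ) * (Nat.fib (j+1)) := by
  have h := Nat.fib_add j n
  have : n + j + 1 = j + n + 1 := by ring
  rw [this, h]; push_cast; ring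

lemma dA_comm (a : ℝ) (m₁ m₂ n₁ n₂ : ℕ) : dA a m₁ m₂ n₁ n₂ = dA a n₁ n₂ m₁ m₂ := by
  unfold dA; rw [max_comm]

lemma aux_main (n k : ℕ) (hn : 1 ≤ n) :
    (k : ℝ) - 1 ≤ dA goldenRatio (Nat.fib (n+k)) (Nat.fib (n+k+1)) (Nat.fib n) (Nat.fib (n+1))
    ∧ dA goldenRatio (Nat.fib (n+k)) (Nat.fib (n+k+1)) (Nat.fib n) (Nat.fib (n+1)) ≤ (k : ℝ) + 1 := by
  set Q : ℕ := max (qPair (Nat.fib n) (Nat.fib (n+1)) (Nat.fib (n+k)) (Nat.fib (n+k+1)))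
      (qPair (Nat.fib (n+k)) (Nat.fib (n+k+1)) (Nat.fib n) (Nat.fib (n+1))) with hQ
  have hdA : dA goldenRatio (Nat.fib (n+k)) (Nat.fib (n+k+1)) (Nat.fib n) (Nat.fib (n+1))
      = Real.logb goldenRatio Q := by rw [hQ]; simp [dA]
  -- upper bounds on the four q's
  have hA : q (Nat.fib n) (Nat.fib (n+1)) (Nat.fib (n+k)) ≤ Nat.fib (k+2) := by
    cases k with
    | zero =>
      have := q_le_witness (n₁ := Nat.fib n) (n₂ := Nat.fib (n+1)) (m := Nat.fib n)
        1 0 (by push_cast; ring)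
      simpa using this
    | succ j =>
      exact le_trans (q_le_pos n j) (Nat.fib_mono (by omega))
  have hB : q (Nat.fib n) (Nat.fib (n+1)) (Nat.fib (n+k+1)) ≤ Nat.fib (k+2) := q_le_pos n k
  have hC : q (Nat.fib (n+k)) (Nat.fib (n+k+1)) (Nat.fib n) ≤ Nat.fib (k+2) := q_le_neg n k
  have hD : q (Nat.fib (n+k)) (Nat.fib (n+k+1)) (Nat.fib (n+1)) ≤ Nat.fib (k+2) := by
    cases k with
    | zero =>
      have := q_le_witness (n₁ := Nat.fib n) (n₂ := Nat.fib (n+1)) (m := Nat.fib (n+1))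
        0 1 (by push_cast; ring)
      simpa using this
    | succ j =>
      have h1 : n + 1 + j = n + (j+1) := by ring
      have := q_le_neg (n+1) j
      rw [h1] at this
      exact le_trans this (Nat.fib_mono (by omega))
  have hQub : Q ≤ Nat.fib (k+2) := by
    simp only [hQ, qPair, max_le_iff]
    exact ⟨⟨hA, hB⟩, ⟨hC, hD⟩⟩
  -- lower bound on q of fib (n+k+1)
  have hlow : Nat.fib (n+k+1) ≤ Nat.fib (n+1) * q (Nat.fib n) (Nat.fib (n+1)) (Nat.fib (n+k+1)) :=
    q_lower (Nat.fib_mono (Nat.le_succ n)) (Nat.fib k) (Nat.fib (k+1)) (pos_witness n k)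
  have hBQ : q (Nat.fib n) (Nat.fib (n+1)) (Nat.fib (n+k+1)) ≤ Q :=
    le_trans (le_max_right _ _) (le_max_left _ _)
  have hQ1 : 1 ≤ Q := by
    have hf : 1 ≤ Nat.fib (n+k+1) := Nat.fib_pos.mpr (by omega)
    by_contra hcon
    have : Q = 0 := by omega
    have : q (Nat.fib n) (Nat.fib (n+1)) (Nat.fib (n+k+1)) = 0 := by omega
    rw [this, Nat.mul_zero] at hlow
    omega
  have hQR1 : (1 : ℝ) ≤ (Q : ℝ) := by exact_mod_cast hQ1
  have hQRpos : (0 : ℝ) < (Q : ℝ) := by linarith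
  have hQRub : (Q : ℝ) ≤ goldenRatio ^ (k+1) := by
    calc (Q : ℝ) ≤ (Nat.fib (k+2) : ℝ) := by exact_mod_cast hQub
      _ ≤ goldenRatio ^ (k+1) := fib_le_gold_pow (k+1)
  constructor
  · -- lower bound
    rw [hdA]
    cases k with
    | zero =>
      have := Real.logb_nonneg one_lt_goldenRatio hQR1
      push_cast; linarith
    | succ j =>
      obtain ⟨n', rfl⟩ : ∃ n', n = n' + 1 := ⟨n - 1, by omega⟩
      have h1 : goldenRatio ^ (n' + (j+1)) ≤ (Nat.fib (n'+1+(j+1)+1) : ℝ) := by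
        have := gold_pow_le_fib (n' + (j+1))
        have e : n' + (j+1) + 2 = n'+1+(j+1)+1 := by ring
        rwa [e] at this
      have h2 : (Nat.fib (n'+1+1) : ℝ) ≤ goldenRatio ^ (n'+1) := fib_le_gold_pow (n'+1)
      have h3 : (Nat.fib (n'+1+(j+1)+1) : ℝ) ≤ (Nat.fib (n'+1+1) : ℝ) * (Q : ℝ) := by
        have hc : (Nat.fib (n'+1+(j+1)+1) : ℝ)
            ≤ (Nat.fib (n'+1+1) : ℝ) * (q (Nat.fib (n'+1)) (Nat.fib (n'+1+1)) (Nat.fib (n'+1+(j+1)+1)) : ℝ) := by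
          exact_mod_cast hlow
        have : (q (Nat.fib (n'+1)) (Nat.fib (n'+1+1)) (Nat.fib (n'+1+(j+1)+1)) : ℝ) ≤ (Q : ℝ) := by
          exact_mod_cast hBQ
        nlinarith [Nat.cast_nonneg (α := ℝ) (Nat.fib (n'+1+1))]
      have h4 : goldenRatio ^ (n' + (j+1)) ≤ goldenRatio ^ (n'+1) * (Q : ℝ) := by
        calc goldenRatio ^ (n' + (j+1)) ≤ (Nat.fib (n'+1+(j+1)+1) : ℝ) := h1
          _ ≤ (Nat.fib (n'+1+1) : ℝ) * (Q : ℝ) := h3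
          _ ≤ goldenRatio ^ (n'+1) * (Q : ℝ) := by nlinarith
      have h5 : goldenRatio ^ j ≤ (Q : ℝ) := by
        have e : n' + (j+1) = (n'+1) + j := by ring
        rw [e, pow_add] at h4
        exact le_of_mul_le_mul_left h4 (pow_pos goldenRatio_pos (n'+1))
      have h6 : Real.logb goldenRatio (goldenRatio ^ j) ≤ Real.logb goldenRatio (Q : ℝ) :=
        Real.logb_le_logb_of_le one_lt_goldenRatio (pow_pos goldenRatio_pos j) h5
      rw [Real.logb_pow, Real.logb_self_eq_one one_lt_goldenRatio] at h6
      push_cast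
      push_cast at h6
      linarith
  · -- upper bound
    rw [hdA]
    have h6 : Real.logb goldenRatio (Q : ℝ) ≤ Real.logb goldenRatio (goldenRatio ^ (k+1)) :=
      Real.logb_le_logb_of_le one_lt_goldenRatio hQRpos hQRub
    rw [Real.logb_pow, Real.logb_self_eq_one one_lt_goldenRatio] at h6
    push_cast at h6
    linarith

/-- (Main Theorem) The map `n ↦ f_n = {F_n, F_{n+1}}` is a (1,1)-quasi-isometric embedding
of `(ℕ, |·|)` into `(𝒳, d_φ)`: for all `m, n ≥ 1`,
`|m - n| - 1 ≤ d_φ(f_m, f_n) ≤ |m - n| + 1`. -/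
theorem stmt_10 (m n : ℕ) (hm : 1 ≤ m) (hn : 1 ≤ n) :
    |(m : ℝ) - n| - 1 ≤
      dA ((1 + Real.sqrt 5) / 2) (Nat.fib m) (Nat.fib (m + 1)) (Nat.fib n) (Nat.fib (n + 1)) ∧
    dA ((1 + Real.sqrt 5) / 2) (Nat.fib m) (Nat.fib (m + 1)) (Nat.fib n) (Nat.fib (n + 1)) ≤
      |(m : ℝ) - n| + 1 := by
  have hgold : (1 + Real.sqrt 5) / 2 = goldenRatio := rfl
  rw [hgold]
  rcases le_total n m with h | h
  · obtain ⟨k, rfl⟩ := Nat.le.dest h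
    have habs : |((n + k : ℕ) : ℝ) - n| = (k : ℝ) := by
      push_cast; rw [abs_of_nonneg] <;> [ring; linarith [Nat.cast_nonneg (α := ℝ) k]]
    rw [habs]
    exact aux_main n k hn
  · obtain ⟨k, rfl⟩ := Nat.le.dest h
    have habs : |(m : ℝ) - ((m + k : ℕ) : ℝ)| = (k : ℝ) := by
      push_cast; rw [abs_of_nonpos] <;> [ring; linarith [Nat.cast_nonneg (α := ℝ) k]]
    rw [habs, dA_comm]
    exact aux_main m k hm
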